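/- arXiv:1602.08485 — 6 statements merged into one kernel-verified Lean document; each statement's English description precedes it below -/
import Mathlib

section
/- Let λ = (λ_1,...,λ_d) ∈ ℂ^d with Σ_{j=1}^d |λ_j|^2 = 1, and let S be a bounded operator on a Hilbert space H satisfying S^{q_1} Σ_{k=0}^{m} (-1)^k C(m,k) S^{*k} S^k = 0 (i.e., S is an (m,q_1)-partial isometry). Define T_j = λ_j S for j = 1,...,d and q = (q_1,...,q_d). Then the commuting tuple T = (T_1,...,T_d) satisfies T^q Σ_{k=0}^{m} (-1)^k C(m,k) Σ_{|α|=k} (k!/α!) T^{*α} T^{α} = 0, i.e., T is a joint (m;(q_1,...,q_d))-partial isometry. -/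
open Finset ContinuousLinearMap Filter

variable {H : Type*} [NormedAddCommGroup H] [InnerProductSpace ℂ H] [CompleteSpace H]

/-- `opPow T α = T 0 ^ α 0 * ⋯ * T (d-1) ^ α (d-1)`. -/
noncomputable def opPow {d : ℕ} (T : Fin d → H →L[ℂ] H) (α : Fin d → ℕ) : H →L[ℂ] H :=
  (List.ofFn fun j => (T j) ^ (α j)).prod

lemma opPow_smul_const {d : ℕ} (c : Fin d → ℂ) (S : H →L[ℂ] H) (α : Fin d → ℕ) :
    opPow (fun j => c j • S) α = (∏ j, c j ^ α j) • S ^ (∑ j, α j) := by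
  induction d with
  | zero => simp [opPow]
  | succ n ih =>
      have := ih (fun j => c j.succ) (fun j => α j.succ)
      simp only [opPow, List.ofFn_succ, List.prod_cons] at this ⊢
      rw [this, smul_pow, Fin.prod_univ_succ, Fin.sum_univ_succ, pow_add,
        smul_mul_assoc, mul_smul_comm, smul_smul]

lemma sum_conj_mul_eq_one {d : ℕ} (lam : Fin d → ℂ)
    (hlam : ∑ j, ‖lam j‖ ^ 2 = (1 : ℝ)) :
    ∑ j, (starRingEnd ℂ) (lam j) * lam j = 1 := by
  have : ∀ j, (starRingEnd ℂ) (lam j) * lam j = ((‖lam j‖ ^ 2 : ℝ) : ℂ) := by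
    intro j
    rw [mul_comm, Complex.mul_conj, Complex.normSq_eq_norm_sq]
  simp_rw [this]
  rw [← Complex.ofReal_sum, hlam, Complex.ofReal_one]

noncomputable def jpiOp {d : ℕ} (m : ℕ) (q : Fin d → ℕ) (T : Fin d → H →L[ℂ] H) :
    H →L[ℂ] H :=
  opPow T q *
    ∑ k ∈ Finset.range (m + 1), ((-1 : ℂ) ^ k * (m.choose k : ℂ)) •
      ∑ α ∈ Finset.Nat.antidiagonalTuple d k,
        (Nat.multinomial Finset.univ α : ℂ) •
          (opPow (fun j => ContinuousLinearMap.adjoint (T j)) α * opPow T α)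

theorem scalar_multiple_jpi {d m : ℕ} (hd : 0 < d) (lam : Fin d → ℂ)
    (hlam : ∑ j, ‖lam j‖ ^ 2 = (1 : ℝ)) (S : H →L[ℂ] H) (q : Fin d → ℕ)
    (hS : S ^ (q ⟨0, hd⟩) *
        ∑ k ∈ Finset.range (m + 1), ((-1 : ℂ) ^ k * (m.choose k : ℂ)) •
          (ContinuousLinearMap.adjoint (S ^ k) * S ^ k) = 0) :
    jpiOp m q (fun j => lam j • S) = 0 := by
  unfold jpiOp
  have hadj : (fun j => ContinuousLinearMap.adjoint ((fun j => lam j • S) j))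
      = fun j => (starRingEnd ℂ) (lam j) • ContinuousLinearMap.adjoint S := by
    funext j; simp [map_smulₛₗ]
  rw [hadj, opPow_smul_const]
  -- simplify the inner sums
  have hinner : ∀ k, ∑ α ∈ Finset.Nat.antidiagonalTuple d k,
      (Nat.multinomial Finset.univ α : ℂ) •
        (opPow (fun j => (starRingEnd ℂ) (lam j) • ContinuousLinearMap.adjoint S) α *
          opPow (fun j => lam j • S) α)
      = ContinuousLinearMap.adjoint (S ^ k) * S ^ k := by
    intro k
    have step : ∀ α ∈ Finset.Nat.antidiagonalTuple d k,
        (Nat.multinomial Finset.univ α : ℂ) •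
          (opPow (fun j => (starRingEnd ℂ) (lam j) • ContinuousLinearMap.adjoint S) α *
            opPow (fun j => lam j • S) α)
        = ((Nat.multinomial Finset.univ α : ℂ) *
            ∏ j, ((starRingEnd ℂ) (lam j) * lam j) ^ α j) •
          ((ContinuousLinearMap.adjoint S) ^ k * S ^ k) := by
      intro α hα
      have hsum : ∑ j, α j = k := (Finset.Nat.mem_antidiagonalTuple.mp hα)
      rw [opPow_smul_const, opPow_smul_const, hsum, smul_mul_assoc, mul_smul_comm,
        smul_smul, smul_smul]
      congr 1
      rw [mul_assoc, ← Finset.prod_mul_distrib]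
      simp_rw [← mul_pow]
    rw [Finset.sum_congr rfl step, ← Finset.sum_smul]
    have hmult : ∑ α ∈ Finset.Nat.antidiagonalTuple d k,
        (Nat.multinomial Finset.univ α : ℂ) *
          ∏ j, ((starRingEnd ℂ) (lam j) * lam j) ^ α j = 1 := by
      rw [← Finset.piAntidiag_univ_fin_eq_antidiagonalTuple,
        ← Finset.sum_pow_eq_sum_piAntidiag, sum_conj_mul_eq_one lam hlam, one_pow]
    rw [hmult, one_smul]
    have : ContinuousLinearMap.adjoint (S ^ k) = (ContinuousLinearMap.adjoint S) ^ k := by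
      rw [← ContinuousLinearMap.star_eq_adjoint, ← ContinuousLinearMap.star_eq_adjoint,
        star_pow]
    rw [this]
  simp_rw [hinner]
  -- now factor S ^ (∑ q) through q 0
  have hq0 : q ⟨0, hd⟩ ≤ ∑ j, q j :=
    Finset.single_le_sum (fun _ _ => Nat.zero_le _) (Finset.mem_univ _)
  have hpow : S ^ (∑ j, q j) = S ^ (∑ j, q j - q ⟨0, hd⟩) * S ^ (q ⟨0, hd⟩) := by
    rw [← pow_add, Nat.sub_add_cancel hq0]
  rw [hpow, smul_mul_assoc, mul_assoc, hS, mul_zero, smul_zero]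
end

section
/- Let T = (T_1,...,T_d) be a jointly quasinormal commuting tuple of bounded operators on a Hilbert space H (T_i commutes with T_j^* T_j for all i, j) that is a joint (m;(1,...,1))-partial isometry, so that T_1⋯T_d (I − Σ_{j=1}^d T_j^* T_j)^m = 0. Then T is a joint (1;(1,...,1))-partial isometry: T_1⋯T_d (I − Σ_{j=1}^d T_j^* T_j) = 0. -/
open Finset ContinuousLinearMap Filter

variable {H : Type*} [NormedAddCommGroup H] [InnerProductSpace ℂ H] [CompleteSpace H]

private lemma sq_ker {A : H →L[ℂ] H} (hA : ContinuousLinearMap.adjoint A = A)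
    {z : H} (hz : A (A z) = 0) : A z = 0 := by
  have h : (inner ℂ (A z) (A z) : ℂ) = 0 := by
    calc (inner ℂ (A z) (A z) : ℂ) = inner ℂ ((ContinuousLinearMap.adjoint A) z) (A z) := by
          rw [hA]
      _ = inner ℂ z (A (A z)) := ContinuousLinearMap.adjoint_inner_left A (A z) z
      _ = 0 := by rw [hz, inner_zero_right]
  exact inner_self_eq_zero.mp h

private lemma pow_ker {A : H →L[ℂ] H} (hA : ContinuousLinearMap.adjoint A = A) :
    ∀ m, ∀ z : H, (A ^ (m + 1)) z = 0 → A z = 0 := by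
  intro m
  induction m with
  | zero => intro z hz; simpa using hz
  | succ n ih =>
      intro z hz
      have hre : (A ^ (n + 1 + 1)) z = A (A ((A ^ n) z)) := by
        rw [pow_succ', pow_succ']
        simp [ContinuousLinearMap.mul_apply]
      rw [hre] at hz
      have h2 : A ((A ^ n) z) = 0 := sq_ker hA hz
      apply ih
      rw [pow_succ']
      simpa [ContinuousLinearMap.mul_apply] using h2

theorem jointly_quasinormal_jpi {d m : ℕ} (T : Fin d → H →L[ℂ] H)
    (hcomm : ∀ i j, Commute (T i) (T j))
    (hqn : ∀ i j, Commute (T i) (ContinuousLinearMap.adjoint (T j) * T j))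
    (hT : (List.ofFn T).prod *
        (1 - ∑ j, ContinuousLinearMap.adjoint (T j) * T j) ^ m = 0) :
    (List.ofFn T).prod * (1 - ∑ j, ContinuousLinearMap.adjoint (T j) * T j) = 0 := by
  set P := (List.ofFn T).prod with hP
  set A := (1 - ∑ j, ContinuousLinearMap.adjoint (T j) * T j : H →L[ℂ] H) with hAdef
  have hA : ContinuousLinearMap.adjoint A = A := by
    rw [← ContinuousLinearMap.star_eq_adjoint, hAdef]
    simp [star_sub, star_sum, star_mul, ContinuousLinearMap.star_eq_adjoint,
      ContinuousLinearMap.adjoint_adjoint]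
  cases m with
  | zero =>
      rw [pow_zero, mul_one] at hT
      rw [hT, zero_mul]
  | succ n =>
      have hadj : A ^ (n + 1) * ContinuousLinearMap.adjoint P = 0 := by
        have := congrArg star hT
        rwa [star_zero, star_mul, star_pow, ContinuousLinearMap.star_eq_adjoint,
          ContinuousLinearMap.star_eq_adjoint, hA] at this
      have hAP : A * ContinuousLinearMap.adjoint P = 0 := by
        ext x
        have hx : (A ^ (n + 1)) (ContinuousLinearMap.adjoint P x) = 0 := by
          have := congrFun (congrArg DFunLike.coe hadj) x
          simpa [ContinuousLinearMap.mul_apply] using this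
        have := pow_ker hA n _ hx
        simpa [ContinuousLinearMap.mul_apply] using this
      have := congrArg star hAP
      rwa [star_zero, star_mul, ContinuousLinearMap.star_eq_adjoint,
        ContinuousLinearMap.star_eq_adjoint, ContinuousLinearMap.adjoint_adjoint, hA] at this
end

section
/- Let T ∈ B(H) satisfy T(I − T^*T)^m = 0 and suppose T commutes with T^*T. Then T(I − T^*T) = 0. -/
open Finset ContinuousLinearMap Filter

variable {H : Type*} [NormedAddCommGroup H] [InnerProductSpace ℂ H] [CompleteSpace H]

/-- A self-adjoint nilpotent element of a C*-algebra is zero. -/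
lemma sa_nilpotent_eq_zero {E : Type*} [NormedRing E] [StarRing E] [CStarRing E]
    {a : E} (ha : IsSelfAdjoint a) {n : ℕ} (hn : 1 ≤ n) (h : a ^ n = 0) : a = 0 := by
  have h2 : a ^ (2 ^ n) = 0 := by
    have hle : n ≤ 2 ^ n := Nat.le_of_lt (Nat.lt_two_pow_self (n := n))
    calc a ^ (2 ^ n) = a ^ n * a ^ (2 ^ n - n) := by
          rw [← pow_add, Nat.add_sub_cancel' hle]
      _ = 0 := by rw [h, zero_mul]
  have := ha.nnnorm_pow_two_pow n
  rw [h2, nnnorm_zero] at this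
  have : ‖a‖₊ = 0 := by
    have := pow_eq_zero_iff (n := 2 ^ n) (by positivity) |>.mp this.symm
    exact this
  simpa [← nnnorm_eq_zero] using this

theorem quasinormal_m_partial_isometry (m : ℕ) (hm : 1 ≤ m) (T : H →L[ℂ] H)
    (hc : Commute T (ContinuousLinearMap.adjoint T * T))
    (hT : T * (1 - ContinuousLinearMap.adjoint T * T) ^ m = 0) :
    T * (1 - ContinuousLinearMap.adjoint T * T) = 0 := by
  set A : H →L[ℂ] H := 1 - ContinuousLinearMap.adjoint T * T with hA
  have hAsa : IsSelfAdjoint A := by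
    rw [hA, ← ContinuousLinearMap.star_eq_adjoint]
    exact (IsSelfAdjoint.one _).sub (IsSelfAdjoint.star_mul_self T)
  have hsub : star T * T = 1 - A := by
    rw [hA, ContinuousLinearMap.star_eq_adjoint, sub_sub_cancel]
  -- adjoint of hT
  have h1 : A ^ m * star T = 0 := by
    have := congrArg star hT
    rwa [star_mul, star_zero, star_pow, hAsa.star_eq] at this
  -- multiply on the right by T
  have h2 : A ^ m * (1 - A) = 0 := by
    have := congrArg (· * T) h1
    simpa [mul_assoc, hsub] using this
  -- (A - A^2) is self-adjoint and nilpotent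
  obtain ⟨n, rfl⟩ : ∃ n, m = n + 1 := ⟨m - 1, (Nat.succ_pred_eq_of_pos hm).symm⟩
  have hCsa : IsSelfAdjoint (A - A ^ 2) := hAsa.sub (hAsa.pow 2)
  have hCn : (A - A ^ 2) ^ (n + 1) = 0 := by
    have hfac : A - A ^ 2 = A * (1 - A) := by rw [mul_one_sub, ← sq]
    have hcomm : Commute A (1 - A) := (Commute.one_right A).sub_right rfl
    rw [hfac, hcomm.mul_pow]
    have : (1 - A) ^ (n + 1) = (1 - A) * (1 - A) ^ n := by rw [pow_succ']
    rw [this, ← mul_assoc, h2, zero_mul]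
  have hC : A - A ^ 2 = 0 := sa_nilpotent_eq_zero hCsa (Nat.succ_le_succ (Nat.zero_le n)) hCn
  -- conclude via the C*-identity
  have hkey : star (T * A) * (T * A) = 0 := by
    calc star (T * A) * (T * A) = A * (star T * T) * A := by
          rw [star_mul, hAsa.star_eq, mul_assoc, mul_assoc, mul_assoc]
      _ = (A - A ^ 2) * A := by rw [hsub]; noncomm_ring
      _ = 0 := by rw [hC, zero_mul]
  have hn : ‖T * A‖ * ‖T * A‖ = 0 := by
    rw [← CStarRing.norm_star_mul_self, hkey, norm_zero]
  have : ‖T * A‖ = 0 := by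
    rcases mul_self_eq_zero.mp hn with h; exact h
  exact norm_eq_zero.mp this
end

section
/- Let T = (T_1,...,T_d) be a commuting tuple of bounded operators on a Hilbert space H, m ∈ ℕ, q ∈ ℤ_+^d, such that ker(T^q) is a reducing subspace for each T_j (i.e., ker(T^q) is invariant under each T_j and each T_j^*). Then T is a joint (m;(q_1,...,q_d))-partial isometry if and only if for all x ∈ H: Σ_{k=0}^m (-1)^k C(m,k) Σ_{|α|=k} (k!/α!) ‖T^α T^{*q} x‖² = 0. -/
open Finset ContinuousLinearMap Filter

open scoped InnerProductSpace

variable {H : Type*} [NormedAddCommGroup H] [InnerProductSpace ℂ H] [CompleteSpace H]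

/-- star of a product of a pairwise-commuting list. -/
lemma star_list_prod_of_comm {M : Type*} [Monoid M] [StarMul M] :
    ∀ l : List M, (∀ a ∈ l, ∀ b ∈ l, Commute a b) → star l.prod = (l.map star).prod
  | [], _ => by simp
  | a :: t, h => by
    simp only [List.prod_cons, List.map_cons, star_mul]
    rw [star_list_prod_of_comm t
      (fun x hx y hy => h x (List.mem_cons_of_mem _ hx) y (List.mem_cons_of_mem _ hy))]
    refine (Commute.list_prod_right _ _ fun b hb => ?_).symm.eq
    obtain ⟨c, hc, rfl⟩ := List.mem_map.1 hb
    exact (h a (List.mem_cons_self) c (List.mem_cons_of_mem _ hc)).star_star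

lemma adjoint_opPow {d : ℕ} (T : Fin d → H →L[ℂ] H)
    (hcomm : ∀ i j, Commute (T i) (T j)) (α : Fin d → ℕ) :
    ContinuousLinearMap.adjoint (opPow T α) =
      opPow (fun j => ContinuousLinearMap.adjoint (T j)) α := by
  rw [← star_eq_adjoint]
  unfold opPow
  rw [star_list_prod_of_comm _ ?_, List.map_ofFn]
  · have he : (star ∘ fun j => T j ^ α j) = fun j => (ContinuousLinearMap.adjoint (T j)) ^ (α j) := by
      funext j
      simp [Function.comp, star_pow, star_eq_adjoint]
    rw [he]
  · intro a ha b hb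
    rw [List.mem_ofFn] at ha hb
    obtain ⟨i, rfl⟩ := ha
    obtain ⟨j, rfl⟩ := hb
    exact (hcomm i j).pow_pow _ _

lemma ker_list_prod (A : H →L[ℂ] H) :
    ∀ l : List (H →L[ℂ] H), (∀ B ∈ l, ∀ y, A y = 0 → A (B y) = 0) →
      ∀ y, A y = 0 → A (l.prod y) = 0
  | [], _, y, hy => by simpa using hy
  | B :: t, h, y, hy => by
    rw [List.prod_cons, ContinuousLinearMap.mul_apply]
    exact h B (List.mem_cons_self) _
      (ker_list_prod A t (fun C hC => h C (List.mem_cons_of_mem _ hC)) y hy)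

lemma ker_pow (A B : H →L[ℂ] H) (h : ∀ y, A y = 0 → A (B y) = 0) :
    ∀ n (y : H), A y = 0 → A ((B ^ n) y) = 0
  | 0, y, hy => by simpa using hy
  | n + 1, y, hy => by
    rw [pow_succ, ContinuousLinearMap.mul_apply]
    exact ker_pow A B h n (B y) (h y hy)

lemma ker_opPow {d : ℕ} (A : H →L[ℂ] H) (S : Fin d → H →L[ℂ] H)
    (h : ∀ j y, A y = 0 → A (S j y) = 0) (α : Fin d → ℕ) (y : H) (hy : A y = 0) :
    A (opPow S α y) = 0 := by
  refine ker_list_prod A _ (fun B hB => ?_) y hy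
  rw [List.mem_ofFn] at hB
  obtain ⟨j, rfl⟩ := hB
  exact ker_pow A (S j) (h j) (α j)

theorem jpi_iff_norm_identity {d m : ℕ} (q : Fin d → ℕ) (T : Fin d → H →L[ℂ] H)
    (hcomm : ∀ i j, Commute (T i) (T j))
    (hred : ∀ (j : Fin d) (x : H), opPow T q x = 0 →
      opPow T q (T j x) = 0 ∧ opPow T q (ContinuousLinearMap.adjoint (T j) x) = 0) :
    jpiOp m q T = 0 ↔
      ∀ x : H,
        ∑ k ∈ Finset.range (m + 1), ((-1 : ℝ) ^ k * (m.choose k : ℝ)) *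
          ∑ α ∈ Finset.Nat.antidiagonalTuple d k,
            (Nat.multinomial Finset.univ α : ℝ) *
              ‖opPow T α (ContinuousLinearMap.adjoint (opPow T q) x)‖ ^ 2 = 0 := by
  classical
  set A := opPow T q with hA
  set S : H →L[ℂ] H :=
    ∑ k ∈ Finset.range (m + 1), ((-1 : ℂ) ^ k * (m.choose k : ℂ)) •
      ∑ α ∈ Finset.Nat.antidiagonalTuple d k,
        (Nat.multinomial Finset.univ α : ℂ) •
          (opPow (fun j => ContinuousLinearMap.adjoint (T j)) α * opPow T α) with hS
  have hjpi : jpiOp m q T = A * S := rfl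
  -- the key inner-product identity
  have key : ∀ x : H,
      ⟪(A * S * ContinuousLinearMap.adjoint A) x, x⟫_ℂ =
        ((∑ k ∈ Finset.range (m + 1), ((-1 : ℝ) ^ k * (m.choose k : ℝ)) *
          ∑ α ∈ Finset.Nat.antidiagonalTuple d k,
            (Nat.multinomial Finset.univ α : ℝ) *
              ‖opPow T α (ContinuousLinearMap.adjoint (opPow T q) x)‖ ^ 2 : ℝ) : ℂ) := by
    intro x
    set y := ContinuousLinearMap.adjoint A x with hy
    have h1 : (A * S * ContinuousLinearMap.adjoint A) x = A (S y) := rfl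
    rw [h1, (ContinuousLinearMap.adjoint_inner_right A (S y) x).symm, ← hy]
    rw [hS]
    simp only [ContinuousLinearMap.sum_apply, ContinuousLinearMap.smul_apply,
      ContinuousLinearMap.mul_apply, sum_inner, inner_smul_left]
    push_cast
    refine Finset.sum_congr rfl fun k _ => ?_
    rw [Finset.mul_sum, Finset.mul_sum]
    refine Finset.sum_congr rfl fun α _ => ?_
    rw [← adjoint_opPow T hcomm α, ContinuousLinearMap.adjoint_inner_left,
      inner_self_eq_norm_sq_to_K]
    push_cast
    ring_nf
    simp [map_mul, map_pow, ← hA]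
    ring
  -- right-hand side as the vanishing of `A * S * adjoint A`
  have h2 : (∀ x : H, ⟪(A * S * ContinuousLinearMap.adjoint A) x, x⟫_ℂ = 0) ↔
      A * S * ContinuousLinearMap.adjoint A = 0 := by
    constructor
    · intro h
      have hlin : ((A * S * ContinuousLinearMap.adjoint A : H →L[ℂ] H) : H →ₗ[ℂ] H) = 0 :=
        (inner_map_self_eq_zero _).1 h
      ext w
      have := DFunLike.congr_fun hlin w
      simpa using this
    · intro h x
      rw [h]
      simp
  rw [hjpi]
  constructor
  · intro h x
    have := key x
    rw [h, zero_mul] at this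
    simp only [ContinuousLinearMap.zero_apply, inner_zero_left] at this
    exact_mod_cast this.symm
  · intro h
    have h0 : A * S * ContinuousLinearMap.adjoint A = 0 := by
      apply h2.1
      intro x
      rw [key x, h x, Complex.ofReal_zero]
    -- kernel preservation
    have hSker : ∀ y : H, A y = 0 → A (S y) = 0 := by
      intro y hy
      rw [hS]
      simp only [ContinuousLinearMap.sum_apply, ContinuousLinearMap.smul_apply,
        ContinuousLinearMap.mul_apply]
      rw [map_sum]
      refine Finset.sum_eq_zero fun k _ => ?_
      rw [map_smul, map_sum]
      rw [Finset.sum_eq_zero fun α _ => ?_]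
      · simp
      · rw [map_smul]
        rw [ker_opPow A (fun j => ContinuousLinearMap.adjoint (T j))
          (fun j z hz => (hred j z hz).2) α _ (ker_opPow A T (fun j z hz => (hred j z hz).1) α y hy)]
        simp
    -- decompose any x into ker A ⊕ (ker A)ᗮ
    ext x
    have hclosed : IsClosed (LinearMap.ker (A : H →ₗ[ℂ] H) : Set H) := ContinuousLinearMap.isClosed_ker A
    haveI : CompleteSpace (LinearMap.ker (A : H →ₗ[ℂ] H)) := hclosed.completeSpace_coe
    obtain ⟨u, hu, v, hv, rfl⟩ := Submodule.exists_add_mem_mem_orthogonal (K := LinearMap.ker (A : H →ₗ[ℂ] H)) x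
    have hAu : (A * S) u = 0 := hSker u (LinearMap.mem_ker.1 hu)
    have hker_eq : LinearMap.ker (A : H →ₗ[ℂ] H) =
        (LinearMap.range (ContinuousLinearMap.adjoint A : H →ₗ[ℂ] H))ᗮ := by
      ext w
      simp only [LinearMap.mem_ker, Submodule.mem_orthogonal]
      constructor
      · rintro hw _ ⟨z, rfl⟩
        simp [ContinuousLinearMap.adjoint_inner_left, show A w = 0 from hw]
      · intro hw
        have := hw (ContinuousLinearMap.adjoint A (A w)) ⟨A w, rfl⟩
        rw [ContinuousLinearMap.adjoint_inner_left] at this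
        exact inner_self_eq_zero.1 this
    have hv' : v ∈ closure ((LinearMap.range (ContinuousLinearMap.adjoint A : H →ₗ[ℂ] H)) : Set H) := by
      have : (LinearMap.ker (A : H →ₗ[ℂ] H))ᗮ =
          (LinearMap.range (ContinuousLinearMap.adjoint A : H →ₗ[ℂ] H)).topologicalClosure := by
        rw [hker_eq, Submodule.orthogonal_orthogonal_eq_closure]
      rw [this] at hv
      exact hv
    have hAv : (A * S) v = 0 := by
      have hsub : ((LinearMap.range (ContinuousLinearMap.adjoint A : H →ₗ[ℂ] H)) : Set H) ⊆
          {w | (A * S) w = 0} := by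
        rintro _ ⟨z, rfl⟩
        have := congrArg (fun (B : H →L[ℂ] H) => B z) h0
        simpa using this
      have hcl : IsClosed {w : H | (A * S) w = 0} := by
        have : {w : H | (A * S) w = 0} = (A * S) ⁻¹' {0} := rfl
        rw [this]
        exact IsClosed.preimage (A * S).continuous isClosed_singleton
      exact closure_minimal hsub hcl hv'
    simp only [map_add, ContinuousLinearMap.zero_apply]
    rw [hAu, hAv, add_zero]
end

section
/- Let T = (T_1,...,T_d) be a commuting tuple of bounded operators on a Hilbert space H that is a joint (m;(q_1,...,q_d))-partial isometry with ker(T^q) reducing each T_j. If λ = (λ_1,...,λ_d) is a joint approximate eigenvalue of T (i.e., there is a sequence of unit vectors x_n with (T_j − λ_j)x_n → 0 for all j), then either λ_1 λ_2 ⋯ λ_d = 0 or Σ_{j=1}^d |λ_j|² = 1. -/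
open Finset ContinuousLinearMap Filter

variable {H : Type*} [NormedAddCommGroup H] [InnerProductSpace ℂ H] [CompleteSpace H]

lemma aux_approx_mul (A B : H →L[ℂ] H) (a b : ℂ) (y : ℕ → H)
    (hA : Tendsto (fun n => ‖A (y n) - a • y n‖) atTop (nhds 0))
    (hB : Tendsto (fun n => ‖B (y n) - b • y n‖) atTop (nhds 0)) :
    Tendsto (fun n => ‖(A * B) (y n) - (a * b) • y n‖) atTop (nhds 0) := by
  have key : ∀ n, ‖(A * B) (y n) - (a * b) • y n‖ ≤
      ‖A‖ * ‖B (y n) - b • y n‖ + ‖b‖ * ‖A (y n) - a • y n‖ := by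
    intro n
    have heq : (A * B) (y n) - (a * b) • y n
        = A (B (y n) - b • y n) + b • (A (y n) - a • y n) := by
      simp only [ContinuousLinearMap.mul_apply, map_sub, map_smul, smul_sub, smul_smul]
      rw [mul_comm b a]
      abel
    rw [heq]
    refine (norm_add_le _ _).trans ?_
    gcongr
    · exact A.le_opNorm _
    · rw [norm_smul]
  have h0 : Tendsto (fun n => ‖A‖ * ‖B (y n) - b • y n‖ + ‖b‖ * ‖A (y n) - a • y n‖)
      atTop (nhds 0) := by
    have := (hB.const_mul ‖A‖).add (hA.const_mul ‖b‖)
    simpa using this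
  exact squeeze_zero (fun n => norm_nonneg _) key h0

lemma aux_approx_pow (A : H →L[ℂ] H) (a : ℂ) (y : ℕ → H)
    (hA : Tendsto (fun n => ‖A (y n) - a • y n‖) atTop (nhds 0)) (p : ℕ) :
    Tendsto (fun n => ‖(A ^ p) (y n) - (a ^ p) • y n‖) atTop (nhds 0) := by
  induction p with
  | zero => simpa using tendsto_const_nhds
  | succ p ih =>
    have := aux_approx_mul A (A ^ p) a (a ^ p) y hA ih
    simpa [pow_succ', mul_comm] using this

lemma aux_approx_listProd (y : ℕ → H) (l : List ((H →L[ℂ] H) × ℂ))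
    (h : ∀ p ∈ l, Tendsto (fun n => ‖p.1 (y n) - p.2 • y n‖) atTop (nhds 0)) :
    Tendsto (fun n => ‖(l.map Prod.fst).prod (y n) - (l.map Prod.snd).prod • y n‖)
      atTop (nhds 0) := by
  induction l with
  | nil => simpa using tendsto_const_nhds
  | cons p l ih =>
    have := aux_approx_mul p.1 (l.map Prod.fst).prod p.2 (l.map Prod.snd).prod y
      (h p (by simp)) (ih (fun q hq => h q (by simp [hq])))
    simpa using this

lemma aux_approx_opPow {d : ℕ} (T : Fin d → H →L[ℂ] H) (lam : Fin d → ℂ) (y : ℕ → H)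
    (h : ∀ j, Tendsto (fun n => ‖T j (y n) - lam j • y n‖) atTop (nhds 0))
    (α : Fin d → ℕ) :
    Tendsto (fun n => ‖opPow T α (y n) - (∏ j, lam j ^ α j) • y n‖) atTop (nhds 0) := by
  have := aux_approx_listProd y (List.ofFn fun j => ((T j) ^ (α j), lam j ^ α j))
    (by
      intro p hp
      rw [List.mem_ofFn] at hp
      obtain ⟨j, rfl⟩ := hp
      exact aux_approx_pow (T j) (lam j) y (h j) (α j))
  simpa [List.map_ofFn, Function.comp_def, opPow, List.prod_ofFn] using this

lemma aux_prod_preserves (P : H → Prop) (l : List (H →L[ℂ] H))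
    (h : ∀ A ∈ l, ∀ z, P z → P (A z)) : ∀ z, P z → P (l.prod z) := by
  induction l with
  | nil => simpa using fun z hz => hz
  | cons a l ih =>
    intro z hz
    simpa using h a (by simp) _ (ih (fun A hA => h A (by simp [hA])) z hz)

lemma aux_pow_preserves (P : H → Prop) (A : H →L[ℂ] H)
    (h : ∀ z, P z → P (A z)) (p : ℕ) : ∀ z, P z → P ((A ^ p) z) := by
  induction p with
  | zero => simpa using fun z hz => hz
  | succ p ih =>
    intro z hz
    rw [pow_succ]
    simpa using ih _ (h z hz)

lemma aux_opPow_preserves {d : ℕ} (T : Fin d → H →L[ℂ] H) (P : H → Prop)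
    (h : ∀ j, ∀ z, P z → P (T j z)) (α : Fin d → ℕ) :
    ∀ z, P z → P (opPow T α z) := by
  refine aux_prod_preserves P _ ?_
  intro A hA
  rw [List.mem_ofFn] at hA
  obtain ⟨j, rfl⟩ := hA
  exact aux_pow_preserves P (T j) (h j) (α j)

local notation "⟪" x ", " y "⟫" => @inner ℂ _ _ x y

lemma aux_inner_listProd_adjoint (l : List (H →L[ℂ] H)) (w v : H) :
    ⟪(l.map ContinuousLinearMap.adjoint).prod w, v⟫ = ⟪w, l.reverse.prod v⟫ := by
  induction l generalizing v with
  | nil => simp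
  | cons a l ih =>
    simp only [List.map_cons, List.prod_cons, ContinuousLinearMap.mul_apply,
      List.reverse_cons, List.prod_append, List.prod_cons, List.prod_nil, mul_one]
    rw [ContinuousLinearMap.adjoint_inner_left, ih]

lemma aux_opPow_adjoint {d : ℕ} (T : Fin d → H →L[ℂ] H)
    (hcomm : ∀ i j, Commute (T i) (T j)) (α : Fin d → ℕ) :
    opPow (fun j => ContinuousLinearMap.adjoint (T j)) α = ContinuousLinearMap.adjoint (opPow T α) := by
  rw [ContinuousLinearMap.eq_adjoint_iff]
  intro x y
  have h1 : opPow (fun j => ContinuousLinearMap.adjoint (T j)) α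
      = ((List.ofFn fun j => (T j) ^ (α j)).map ContinuousLinearMap.adjoint).prod := by
    rw [List.map_ofFn]
    unfold opPow
    refine congrArg List.prod (congrArg List.ofFn (funext fun j => ?_))
    simp only [Function.comp]
    rw [← ContinuousLinearMap.star_eq_adjoint, ← ContinuousLinearMap.star_eq_adjoint, star_pow]
  have h2 : (List.ofFn fun j => (T j) ^ (α j)).reverse.prod
      = (List.ofFn fun j => (T j) ^ (α j)).prod := by
    refine List.Perm.prod_eq' (List.reverse_perm _) ?_
    rw [List.pairwise_reverse]
    rw [List.pairwise_ofFn]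
    intro i j hij
    exact (hcomm j i).pow_pow _ _
  rw [h1, aux_inner_listProd_adjoint, h2]
  rfl

theorem jpi_approx_spectrum {d m : ℕ} (q : Fin d → ℕ) (T : Fin d → H →L[ℂ] H)
    (hcomm : ∀ i j, Commute (T i) (T j)) (hT : jpiOp m q T = 0)
    (hred : ∀ (j : Fin d) (x : H), opPow T q x = 0 →
      opPow T q (T j x) = 0 ∧ opPow T q (ContinuousLinearMap.adjoint (T j) x) = 0)
    (lam : Fin d → ℂ) (x : ℕ → H) (hx : ∀ n, ‖x n‖ = 1)
    (htend : ∀ j, Filter.Tendsto (fun n => ‖T j (x n) - lam j • x n‖)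
      Filter.atTop (nhds 0)) :
    (∏ j, lam j) = 0 ∨ ∑ j, ‖lam j‖ ^ 2 = (1 : ℝ) := by
  by_cases hprod : (∏ j, lam j) = 0
  · exact Or.inl hprod
  right
  classical
  unfold jpiOp at hT
  set S : H →L[ℂ] H := ∑ k ∈ Finset.range (m + 1), ((-1 : ℂ) ^ k * (m.choose k : ℂ)) •
      ∑ α ∈ Finset.Nat.antidiagonalTuple d k,
        (Nat.multinomial Finset.univ α : ℂ) •
          (opPow (fun j => ContinuousLinearMap.adjoint (T j)) α * opPow T α) with hSdef
  have hTS : ∀ z : H, opPow T q (S z) = 0 := by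
    intro z
    have h := congrArg (fun (A : H →L[ℂ] H) => A z) hT
    simpa [ContinuousLinearMap.mul_apply] using h
  set K : Submodule ℂ H := LinearMap.ker (opPow T q : H →ₗ[ℂ] H) with hK
  haveI : CompleteSpace K := (ContinuousLinearMap.isClosed_ker _).completeSpace_coe
  have hTK : ∀ j, ∀ z, z ∈ K → T j z ∈ K := fun j z hz =>
    LinearMap.mem_ker.mpr (hred j z (LinearMap.mem_ker.mp hz)).1
  have hTsK : ∀ j, ∀ z, z ∈ K → ContinuousLinearMap.adjoint (T j) z ∈ K := fun j z hz =>
    LinearMap.mem_ker.mpr (hred j z (LinearMap.mem_ker.mp hz)).2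
  have hTW : ∀ j, ∀ z, z ∈ Kᗮ → T j z ∈ Kᗮ := by
    intro j z hz
    rw [Submodule.mem_orthogonal]
    intro w hw
    rw [← ContinuousLinearMap.adjoint_inner_left]
    exact (Submodule.mem_orthogonal K z).mp hz _ (hTsK j w hw)
  set u : ℕ → H := fun n => (K.orthogonalProjectionOnto (x n) : H) with hudef
  set v : ℕ → H := fun n => x n - u n with hvdef
  have hu : ∀ n, u n ∈ K := fun n => (K.orthogonalProjectionOnto (x n)).2
  have hv : ∀ n, v n ∈ Kᗮ := fun n => K.sub_starProjection_mem_orthogonal (x n)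
  have pyth : ∀ a b : H, a ∈ K → b ∈ Kᗮ → ‖a‖ ≤ ‖a + b‖ ∧ ‖b‖ ≤ ‖a + b‖ := by
    intro a b ha hb
    have hab : (inner ℂ a b : ℂ) = 0 := (Submodule.mem_orthogonal K b).mp hb a ha
    have h2 : ‖a + b‖ ^ 2 = ‖a‖ ^ 2 + ‖b‖ ^ 2 := by
      rw [@norm_add_sq ℂ _ _ _ _ a b, hab]
      simp
    constructor
    · refine le_of_pow_le_pow_left₀ two_ne_zero (norm_nonneg _) ?_
      rw [h2]; nlinarith [sq_nonneg ‖b‖]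
    · refine le_of_pow_le_pow_left₀ two_ne_zero (norm_nonneg _) ?_
      rw [h2]; nlinarith [sq_nonneg ‖a‖]
  have hxuv : ∀ n, x n = u n + v n := by intro n; simp [hvdef]
  have hvapprox : ∀ j, Tendsto (fun n => ‖T j (v n) - lam j • v n‖) atTop (nhds 0) := by
    intro j
    refine squeeze_zero (fun n => norm_nonneg _) (fun n => ?_) (htend j)
    have hsplit : T j (x n) - lam j • x n
        = (T j (u n) - lam j • u n) + (T j (v n) - lam j • v n) := by
      rw [hxuv n, map_add, smul_add]; abel
    have h1 : T j (u n) - lam j • u n ∈ K := K.sub_mem (hTK j _ (hu n)) (K.smul_mem _ (hu n))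
    have h2 : T j (v n) - lam j • v n ∈ Kᗮ := Kᗮ.sub_mem (hTW j _ (hv n)) (Kᗮ.smul_mem _ (hv n))
    calc ‖T j (v n) - lam j • v n‖
        ≤ ‖(T j (u n) - lam j • u n) + (T j (v n) - lam j • v n)‖ := (pyth _ _ h1 h2).2
      _ = ‖T j (x n) - lam j • x n‖ := by rw [← hsplit]
  have hlamne : ∀ j, lam j ≠ 0 := by
    intro j
    exact Finset.prod_ne_zero_iff.mp hprod j (Finset.mem_univ j)
  set μ : ℂ := ∏ j, lam j ^ q j with hμdef
  have hμ : μ ≠ 0 := Finset.prod_ne_zero_iff.mpr (fun j _ => pow_ne_zero _ (hlamne j))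
  have hxq := aux_approx_opPow T lam x htend q
  have hqu : ∀ n, opPow T q (u n) = 0 := fun n => LinearMap.mem_ker.mp (hu n)
  have huzero : Tendsto (fun n => ‖u n‖) atTop (nhds 0) := by
    have key : ∀ n, ‖μ‖ * ‖u n‖ ≤ ‖opPow T q (x n) - μ • x n‖ := by
      intro n
      have hsplit : opPow T q (x n) - μ • x n
          = (-(μ • u n)) + (opPow T q (v n) - μ • v n) := by
        rw [hxuv n, map_add, hqu n, smul_add]; abel
      have h1 : -(μ • u n) ∈ K := K.neg_mem (K.smul_mem _ (hu n))
      have h2 : opPow T q (v n) - μ • v n ∈ Kᗮ :=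
        Kᗮ.sub_mem (aux_opPow_preserves T (· ∈ Kᗮ) hTW q _ (hv n)) (Kᗮ.smul_mem _ (hv n))
      have h3 := (pyth _ _ h1 h2).1
      rw [← hsplit] at h3
      simpa [norm_smul] using h3
    have h4 : Tendsto (fun n => ‖μ‖ * ‖u n‖) atTop (nhds 0) :=
      squeeze_zero (fun n => by positivity) key hxq
    have h5 := h4.const_mul (‖μ‖⁻¹)
    simp only [mul_zero] at h5
    have h6 : ∀ n, ‖μ‖⁻¹ * (‖μ‖ * ‖u n‖) = ‖u n‖ := by
      intro n
      rw [← mul_assoc, inv_mul_cancel₀ (by simpa using hμ), one_mul]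
    refine h5.congr (fun n => h6 n)
  have hvnorm : Tendsto (fun n => ‖v n‖) atTop (nhds 1) := by
    have key : ∀ n, |‖v n‖ - 1| ≤ ‖u n‖ := by
      intro n
      have h1 := abs_norm_sub_norm_le (v n) (x n)
      rw [hx n] at h1
      refine h1.trans (le_of_eq ?_)
      rw [hvdef]
      simp
    have h2 : Tendsto (fun n => ‖v n‖ - 1) atTop (nhds 0) :=
      squeeze_zero_norm (fun n => key n) huzero
    have h3 := h2.add_const 1
    simpa using h3
  have hinner0 : ∀ n, (inner ℂ (v n) (S (v n)) : ℂ) = 0 := by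
    intro n
    have h1 : S (v n) ∈ K := LinearMap.mem_ker.mpr (hTS (v n))
    have h2 : (inner ℂ (S (v n)) (v n) : ℂ) = 0 := (Submodule.mem_orthogonal K (v n)).mp (hv n) _ h1
    rw [← inner_conj_symm, h2, map_zero]
  have hexp : ∀ w : H, (inner ℂ w (S w) : ℂ)
      = ∑ k ∈ Finset.range (m + 1), ((-1 : ℂ) ^ k * (m.choose k : ℂ)) *
        ∑ α ∈ Finset.Nat.antidiagonalTuple d k,
          (Nat.multinomial Finset.univ α : ℂ) * ((‖opPow T α w‖ : ℂ) ^ 2) := by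
    intro w
    rw [hSdef]
    simp only [ContinuousLinearMap.sum_apply, ContinuousLinearMap.smul_apply, inner_sum,
      inner_smul_right, ContinuousLinearMap.mul_apply]
    refine Finset.sum_congr rfl (fun k _ => ?_)
    congr 1
    refine Finset.sum_congr rfl (fun α _ => ?_)
    congr 1
    rw [aux_opPow_adjoint T hcomm α, ContinuousLinearMap.adjoint_inner_right,
      inner_self_eq_norm_sq_to_K]
    norm_cast
  have hlim : ∀ α : Fin d → ℕ, Tendsto (fun n => (‖opPow T α (v n)‖ ^ 2 : ℝ)) atTop
      (nhds (∏ j, (‖lam j‖ ^ 2) ^ α j)) := by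
    intro α
    have h1 := aux_approx_opPow T lam v hvapprox α
    have h2 : Tendsto (fun n => ‖(∏ j, lam j ^ α j) • v n‖) atTop
        (nhds ‖∏ j, lam j ^ α j‖) := by
      have := hvnorm.const_mul ‖∏ j, lam j ^ α j‖
      simp only [mul_one] at this
      simpa [norm_smul] using this
    have h3 : Tendsto (fun n => ‖opPow T α (v n)‖) atTop (nhds ‖∏ j, lam j ^ α j‖) := by
      have hd : Tendsto (fun n => ‖opPow T α (v n)‖ - ‖(∏ j, lam j ^ α j) • v n‖) atTop
          (nhds 0) := squeeze_zero_norm (fun n => abs_norm_sub_norm_le _ _) h1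
      have := hd.add h2
      simpa using this
    have h4 := h3.pow 2
    have h5 : ‖∏ j, lam j ^ α j‖ ^ 2 = ∏ j, (‖lam j‖ ^ 2) ^ α j := by
      rw [norm_prod, ← Finset.prod_pow]
      refine Finset.prod_congr rfl (fun j _ => ?_)
      rw [norm_pow, ← pow_mul, ← pow_mul, mul_comm]
    rw [h5] at h4
    exact h4
  set L : ℝ := ∑ k ∈ Finset.range (m + 1), (-1 : ℝ) ^ k * (m.choose k : ℝ) *
      ∑ α ∈ Finset.Nat.antidiagonalTuple d k,
        (Nat.multinomial Finset.univ α : ℝ) * ∏ j, (‖lam j‖ ^ 2) ^ α j with hLdef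
  have hglim : Tendsto (fun n => (inner ℂ (v n) (S (v n)) : ℂ)) atTop (nhds (L : ℂ)) := by
    simp only [hexp, hLdef]
    push_cast
    refine tendsto_finset_sum _ (fun k _ => ?_)
    refine Tendsto.const_mul _ (tendsto_finset_sum _ (fun α _ => ?_))
    refine Tendsto.const_mul _ ?_
    have h := (hlim α)
    have h2 := (Complex.continuous_ofReal.tendsto _).comp h
    simp only [Function.comp_def] at h2
    push_cast at h2
    refine Tendsto.congr (fun n => ?_) h2
    simp only [Function.comp]
  have hL0 : (L : ℂ) = 0 := by
    refine tendsto_nhds_unique hglim ?_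
    simp only [hinner0]
    exact tendsto_const_nhds
  have hLreal : L = 0 := by exact_mod_cast hL0
  set s : ℝ := ∑ j, ‖lam j‖ ^ 2 with hsdef
  have hmono : ∀ k, (∑ α ∈ Finset.Nat.antidiagonalTuple d k,
      (Nat.multinomial Finset.univ α : ℝ) * ∏ j, (‖lam j‖ ^ 2) ^ α j) = s ^ k := by
    intro k
    rw [hsdef, Finset.sum_pow_eq_sum_piAntidiag, Finset.piAntidiag_univ_fin_eq_antidiagonalTuple]
  have hb2 : (1 - s) ^ m = ∑ k ∈ Finset.range (m + 1), (-1 : ℝ) ^ k * (m.choose k : ℝ) * s ^ k := by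
    have ha := add_pow (-s) 1 m
    simp only [one_pow, mul_one] at ha
    calc (1 - s) ^ m = (-s + 1) ^ m := by ring_nf
      _ = ∑ k ∈ Finset.range (m + 1), (-s) ^ k * ((m.choose k : ℝ)) := by rw [ha]
      _ = _ := Finset.sum_congr rfl (fun k _ => by rw [neg_pow]; ring)
  have hbinom : L = (1 - s) ^ m := by
    rw [hLdef]
    simp only [hmono]
    rw [hb2]
  rw [hbinom] at hLreal
  have hm : m ≠ 0 := by
    intro hm
    rw [hm] at hLreal
    simpa using hLreal
  have h1s : 1 - s = 0 := (pow_eq_zero_iff hm).mp hLreal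
  linarith
end

section
/- Let T = (T_1,...,T_d) be a commuting tuple of bounded operators on H that is a joint (m;(q_1,...,q_d))-partial isometry with ker(T^q) reducing each T_j. Let x and y be joint eigenvectors: T_j x = λ_j x and T_j y = μ_j y for all j, with λ ≠ μ and λ_1⋯λ_d ≠ 0 and Σ_j λ_j conj(μ_j) ≠ 1. Then ⟨x, y⟩ = 0. -/
open Finset ContinuousLinearMap Filter

variable {H : Type*} [NormedAddCommGroup H] [InnerProductSpace ℂ H] [CompleteSpace H]

lemma pow_apply_eig (A : H →L[ℂ] H) (c : ℂ) (v : H) (h : A v = c • v) (n : ℕ) :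
    (A ^ n) v = c ^ n • v := by
  induction n with
  | zero => simp
  | succ n ih =>
    rw [pow_succ, ContinuousLinearMap.mul_apply, h, map_smul, ih, smul_smul, pow_succ, mul_comm]

lemma opPow_succ {d : ℕ} (T : Fin (d + 1) → H →L[ℂ] H) (α : Fin (d + 1) → ℕ) :
    opPow T α = T 0 ^ α 0 * opPow (fun j => T j.succ) (fun j => α j.succ) := by
  simp [opPow, List.ofFn_succ]

lemma opPow_apply_eig {d : ℕ} (T : Fin d → H →L[ℂ] H) (c : Fin d → ℂ) (v : H)
    (h : ∀ j, T j v = c j • v) (α : Fin d → ℕ) :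
    opPow T α v = (∏ j, c j ^ α j) • v := by
  induction d with
  | zero => simp [opPow]
  | succ d ih =>
    rw [opPow_succ, ContinuousLinearMap.mul_apply, ih (fun j => T j.succ) (fun j => c j.succ) (fun j => h j.succ),
      map_smul, pow_apply_eig (T 0) (c 0) v (h 0), smul_smul, Fin.prod_univ_succ, mul_comm]

lemma opPow_mem {d : ℕ} (T : Fin d → H →L[ℂ] H) (W : Submodule ℂ H)
    (hW : ∀ j w, w ∈ W → T j w ∈ W) (α : Fin d → ℕ) (v : H) (hv : v ∈ W) :
    opPow T α v ∈ W := by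
  induction d with
  | zero => simpa [opPow]
  | succ d ih =>
    rw [opPow_succ, ContinuousLinearMap.mul_apply]
    have h1 : opPow (fun j => T j.succ) (fun j => α j.succ) v ∈ W :=
      ih (fun j => T j.succ) (fun j w hw => hW j.succ w hw) (fun j => α j.succ)
    generalize opPow (fun j => T j.succ) (fun j => α j.succ) v = w at h1 ⊢
    induction α 0 with
    | zero => simpa
    | succ n ihn => rw [pow_succ', ContinuousLinearMap.mul_apply]; exact hW 0 _ ihn

lemma inner_opPow_adjoint_eig {d : ℕ} (T : Fin d → H →L[ℂ] H) (c : Fin d → ℂ) (w : H)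
    (h : ∀ j, T j w = c j • w) (α : Fin d → ℕ) (z : H) :
    (inner ℂ (opPow (fun j => ContinuousLinearMap.adjoint (T j)) α z) w : ℂ)
      = (∏ j, c j ^ α j) * inner ℂ z w := by
  induction d generalizing z with
  | zero => simp [opPow]
  | succ d ih =>
    rw [opPow_succ, ContinuousLinearMap.mul_apply]
    have hpow : (ContinuousLinearMap.adjoint (T 0)) ^ α 0
        = ContinuousLinearMap.adjoint (T 0 ^ α 0) := by
      rw [← ContinuousLinearMap.star_eq_adjoint, ← ContinuousLinearMap.star_eq_adjoint, star_pow]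
    rw [hpow, ContinuousLinearMap.adjoint_inner_left,
      pow_apply_eig (T 0) (c 0) w (h 0), inner_smul_right,
      ih (fun j => T j.succ) (fun j => c j.succ) (fun j => h j.succ) (fun j => α j.succ) z,
      Fin.prod_univ_succ]
    ring

theorem jpi_eigenvectors_orthogonal {d m : ℕ} (q : Fin d → ℕ)
    (T : Fin d → H →L[ℂ] H)
    (hcomm : ∀ i j, Commute (T i) (T j)) (hT : jpiOp m q T = 0)
    (hred : ∀ (j : Fin d) (x : H), opPow T q x = 0 →
      opPow T q (T j x) = 0 ∧ opPow T q (ContinuousLinearMap.adjoint (T j) x) = 0)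
    (lam mu : Fin d → ℂ) (x y : H) (hx : x ≠ 0) (hy : y ≠ 0)
    (heigx : ∀ j, T j x = lam j • x) (heigy : ∀ j, T j y = mu j • y)
    (hne : lam ≠ mu) (hlam : (∏ j, lam j) ≠ 0)
    (hsum : ∑ j, lam j * (starRingEnd ℂ) (mu j) ≠ 1) :
    (inner ℂ x y : ℂ) = 0 := by
  classical
  -- the kernel of `T^q`
  set K : Submodule ℂ H := LinearMap.ker (opPow T q : H →ₗ[ℂ] H) with hK
  have hmemK : ∀ z, z ∈ K ↔ opPow T q z = 0 := fun z => LinearMap.mem_ker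
  haveI : CompleteSpace K := (ContinuousLinearMap.isClosed_ker (opPow T q)).completeSpace_coe
  -- invariance of K and Kᗮ
  have hKT : ∀ j z, z ∈ K → T j z ∈ K := fun j z hz =>
    (hmemK _).2 (hred j z ((hmemK _).1 hz)).1
  have hKTadj : ∀ j z, z ∈ K → ContinuousLinearMap.adjoint (T j) z ∈ K := fun j z hz =>
    (hmemK _).2 (hred j z ((hmemK _).1 hz)).2
  have hKpT : ∀ j w, w ∈ Kᗮ → T j w ∈ Kᗮ := by
    intro j w hw
    rw [Submodule.mem_orthogonal] at hw ⊢
    intro u hu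
    rw [← ContinuousLinearMap.adjoint_inner_left]
    exact hw _ (hKTadj j u hu)
  have hKpTadj : ∀ j w, w ∈ Kᗮ → ContinuousLinearMap.adjoint (T j) w ∈ Kᗮ := by
    intro j w hw
    rw [Submodule.mem_orthogonal] at hw ⊢
    intro u hu
    rw [← ContinuousLinearMap.adjoint_inner_left, ContinuousLinearMap.adjoint_adjoint]
    exact hw _ (hKT j u hu)
  -- x is orthogonal to K
  have hxperp : x ∈ Kᗮ := by
    set x0 : H := (K.orthogonalProjectionOnto x : H) with hx0def
    have hx0K : x0 ∈ K := (K.orthogonalProjectionOnto x).2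
    have hx1 : x - x0 ∈ Kᗮ := K.sub_starProjection_mem_orthogonal x
    have heig0 : ∀ j, T j x0 = lam j • x0 := by
      intro j
      have h1 : T j x0 - lam j • x0 ∈ K := K.sub_mem (hKT j x0 hx0K) (K.smul_mem _ hx0K)
      have h2 : T j x0 - lam j • x0 ∈ Kᗮ := by
        have heq : T j x0 - lam j • x0 = lam j • (x - x0) - T j (x - x0) := by
          rw [map_sub, smul_sub, heigx j]; abel
        rw [heq]
        exact Kᗮ.sub_mem (Kᗮ.smul_mem _ hx1) (hKpT j _ hx1)
      have h0 := Submodule.disjoint_def.mp K.orthogonal_disjoint _ h1 h2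
      exact sub_eq_zero.mp h0
    have hx0zero : x0 = 0 := by
      have h1 : opPow T q x0 = (∏ j, lam j ^ q j) • x0 := opPow_apply_eig T lam x0 heig0 q
      have h2 : opPow T q x0 = 0 := (hmemK _).1 hx0K
      have hc : (∏ j, lam j ^ q j) ≠ 0 :=
        Finset.prod_ne_zero_iff.2 fun j _ =>
          pow_ne_zero _ (Finset.prod_ne_zero_iff.1 hlam j (Finset.mem_univ j))
      rw [h1, smul_eq_zero] at h2
      exact h2.resolve_left hc
    have : x = x - x0 := by rw [hx0zero, sub_zero]
    rw [this]
    exact hx1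
  -- the defect operator
  set S : H →L[ℂ] H :=
    ∑ k ∈ Finset.range (m + 1), ((-1 : ℂ) ^ k * (m.choose k : ℂ)) •
      ∑ α ∈ Finset.Nat.antidiagonalTuple d k,
        (Nat.multinomial Finset.univ α : ℂ) •
          (opPow (fun j => ContinuousLinearMap.adjoint (T j)) α * opPow T α) with hS
  have hSxK : S x ∈ K := by
    rw [hmemK]
    have : (jpiOp m q T) x = 0 := by rw [hT]; rfl
    simpa [jpiOp, ContinuousLinearMap.mul_apply, ← hS] using this
  have hSxperp : S x ∈ Kᗮ := by
    rw [hS]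
    simp only [ContinuousLinearMap.sum_apply, ContinuousLinearMap.smul_apply,
      ContinuousLinearMap.mul_apply]
    refine Submodule.sum_mem _ fun k _ => Submodule.smul_mem _ _ ?_
    refine Submodule.sum_mem _ fun α _ => Submodule.smul_mem _ _ ?_
    exact opPow_mem _ _ hKpTadj α _ (opPow_mem T _ hKpT α x hxperp)
  have hSx0 : S x = 0 := by
    have := (Submodule.mem_orthogonal _ _).1 hSxperp _ hSxK
    exact inner_self_eq_zero.mp this
  -- compute ⟨S x, y⟩
  set t : ℂ := ∑ j, (starRingEnd ℂ) (lam j) * mu j with ht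
  have hterm : ∀ α : Fin d → ℕ,
      (inner ℂ (opPow (fun j => ContinuousLinearMap.adjoint (T j)) α (opPow T α x)) y : ℂ)
        = (∏ j, ((starRingEnd ℂ) (lam j) * mu j) ^ α j) * inner ℂ x y := by
    intro α
    rw [opPow_apply_eig T lam x heigx α, map_smul, inner_smul_left,
      inner_opPow_adjoint_eig T mu y heigy α x, map_prod]
    simp only [map_pow]
    rw [← mul_assoc, ← Finset.prod_mul_distrib]
    congr 1
    exact Finset.prod_congr rfl fun j _ => (mul_pow _ _ _).symm
  have hmult : ∀ k : ℕ, t ^ k = ∑ α ∈ Finset.Nat.antidiagonalTuple d k,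
      (Nat.multinomial Finset.univ α : ℂ) * ∏ j, ((starRingEnd ℂ) (lam j) * mu j) ^ α j := by
    intro k
    rw [ht, Finset.sum_pow_eq_sum_piAntidiag univ _ k,
      Finset.piAntidiag_univ_fin_eq_antidiagonalTuple]
  have key : (inner ℂ ((S : H →L[ℂ] H) x) y : ℂ) = (1 - t) ^ m * inner ℂ x y := by
    calc (inner ℂ ((S : H →L[ℂ] H) x) y : ℂ)
        = ∑ k ∈ Finset.range (m + 1), ((-1 : ℂ) ^ k * (m.choose k : ℂ)) *
            ∑ α ∈ Finset.Nat.antidiagonalTuple d k, (Nat.multinomial Finset.univ α : ℂ) *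
              ((∏ j, ((starRingEnd ℂ) (lam j) * mu j) ^ α j) * inner ℂ x y) := by
          rw [hS]
          simp only [ContinuousLinearMap.sum_apply, ContinuousLinearMap.smul_apply,
            ContinuousLinearMap.mul_apply]
          rw [sum_inner]
          refine Finset.sum_congr rfl fun k _ => ?_
          rw [inner_smul_left]
          congr 1
          · simp
          rw [sum_inner]
          refine Finset.sum_congr rfl fun α _ => ?_
          rw [inner_smul_left, hterm α]
          congr 1
          simp
      _ = ∑ k ∈ Finset.range (m + 1), ((-1 : ℂ) ^ k * (m.choose k : ℂ)) *
            (t ^ k * inner ℂ x y) := by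
          refine Finset.sum_congr rfl fun k _ => ?_
          congr 1
          rw [hmult k, Finset.sum_mul]
          exact Finset.sum_congr rfl fun α _ => (mul_assoc _ _ _).symm
      _ = (∑ k ∈ Finset.range (m + 1), ((-1 : ℂ) ^ k * (m.choose k : ℂ)) * t ^ k) *
            inner ℂ x y := by
          rw [Finset.sum_mul]
          exact Finset.sum_congr rfl fun k _ => (mul_assoc _ _ _).symm
      _ = (1 - t) ^ m * inner ℂ x y := by
          congr 1
          rw [sub_eq_neg_add, add_pow]
          refine Finset.sum_congr rfl fun k _ => ?_
          rw [one_pow, neg_pow]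
          ring
  have htne : t ≠ 1 := by
    intro h
    apply hsum
    have := congrArg (starRingEnd ℂ) h
    simpa [ht, map_sum, mul_comm] using this
  have hz : (1 - t) ^ m * (inner ℂ x y : ℂ) = 0 := by
    rw [← key, hSx0, inner_zero_left]
  rcases mul_eq_zero.mp hz with h | h
  · exact absurd h (pow_ne_zero _ (sub_ne_zero.2 fun h' => htne h'.symm))
  · exact h
end
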